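/- Let R be a connected commutative ring with 2 invertible, and let S be a quadratic étale R-algebra (a commutative separable R-algebra that is finite projective of constant rank 2 as an R-module). If S is not connected (i.e. S has an idempotent other than 0 and 1), then S is isomorphic to R × R as an R-algebra. -/

import Mathlib

open TensorProduct

section AuxLemmas

/-- A ring whose only idempotents are `0` and `1` has preconnected prime spectrum. -/
lemma aux_preconnected {R : Type*} [CommRing R]
    (hconn : ∀ e : R, e * e = e → e = 0 ∨ e = 1) :
    PreconnectedSpace (PrimeSpectrum R) := by
  apply preconnectedSpace_of_forall_constant
  intro f hf x y
  have hclopen : IsClopen (f ⁻¹' {true}) :=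
    ⟨(isClosed_discrete _).preimage hf, (isOpen_discrete _).preimage hf⟩
  obtain ⟨e, he, hs⟩ := PrimeSpectrum.isClopen_iff.mp hclopen
  rcases hconn e he with rfl | rfl
  · have h0 : f ⁻¹' {true} = (∅ : Set (PrimeSpectrum R)) := by
      rw [hs]; simp
    have hfz : ∀ z, f z = false := by
      intro z
      have := Set.eq_empty_iff_forall_notMem.mp h0 z
      simpa using this
    rw [hfz x, hfz y]
  · have h1 : f ⁻¹' {true} = Set.univ := by
      rw [hs]; simp
    have hfz : ∀ z, f z = true := by
      intro z
      have : z ∈ f ⁻¹' {true} := h1 ▸ Set.mem_univ z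
      simpa using this
    rw [hfz x, hfz y]

/-- A finite free module of rank `0` is trivial. -/
lemma aux_subsingleton_of_finrank_zero {T L : Type*} [CommRing T] [Nontrivial T]
    [AddCommGroup L] [Module T L] [Module.Free T L] [Module.Finite T L]
    (h : Module.finrank T L = 0) : Subsingleton L := by
  have hcard := Module.finrank_eq_card_chooseBasisIndex T L
  rw [h] at hcard
  haveI : IsEmpty (Module.Free.ChooseBasisIndex T L) :=
    Fintype.card_eq_zero_iff.mp hcard.symm
  exact (Module.Free.chooseBasis T L).repr.toEquiv.subsingleton

/-- An algebra which is finite free of rank `1` as a module is a trivial extension. -/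
lemma aux_bij_of_rank_one {T L : Type*} [CommRing T] [Nontrivial T] [CommRing L] [Algebra T L]
    [Module.Free T L] [Module.Finite T L] (h : Module.finrank T L = 1) :
    Function.Bijective (algebraMap T L) := by
  classical
  let b := Module.Free.chooseBasis T L
  have hcard : Fintype.card (Module.Free.ChooseBasisIndex T L) = 1 := by
    rw [← Module.finrank_eq_card_chooseBasisIndex, h]
  obtain ⟨i, hi⟩ := Fintype.card_eq_one_iff.mp hcard
  have hx : ∀ x : L, x = b.repr x i • b i := by
    intro x
    conv_lhs => rw [← b.sum_repr x]
    rw [Finset.sum_eq_single_of_mem i (Finset.mem_univ i)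
      (fun j _ hj => absurd (hi j) hj)]
  have hrep : ∀ t : T, b.repr (t • b i) i = t := by
    intro t
    rw [map_smul, Finsupp.smul_apply, Module.Basis.repr_self, Finsupp.single_eq_same,
      smul_eq_mul, mul_one]
  set u := b.repr 1 i with hu
  set c := b.repr (b i * b i) i with hc
  have h1 : (1 : L) = u • b i := hx 1
  have hbb : b i * b i = c • b i := hx _
  have huc : u * c = 1 := by
    have hav : (u * c) • b i = b i := by
      rw [mul_smul, ← hbb, ← smul_mul_assoc, ← h1, one_mul]
    calc u * c = b.repr ((u * c) • b i) i := (hrep _).symm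
      _ = b.repr (b i) i := by rw [hav]
      _ = 1 := by rw [Module.Basis.repr_self, Finsupp.single_eq_same]
  constructor
  · intro x y hxy
    have hb : (x * u) • b i = (y * u) • b i := by
      rw [mul_smul, mul_smul, ← h1]
      simpa [Algebra.algebraMap_eq_smul_one] using hxy
    have hxu : x * u = y * u := by rw [← hrep (x * u), hb, hrep]
    calc x = x * (u * c) := by rw [huc, mul_one]
      _ = (x * u) * c := by ring
      _ = (y * u) * c := by rw [hxu]
      _ = y * (u * c) := by ring
      _ = y := by rw [huc, mul_one]
  · intro x
    refine ⟨b.repr x i * c, ?_⟩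
    rw [Algebra.algebraMap_eq_smul_one, h1, smul_smul]
    have hvc : b.repr x i * c * u = b.repr x i := by
      rw [mul_assoc, mul_comm c u, huc, mul_one]
    rw [hvc, ← hx]

/-- For a finite projective module, the fiber rank at a maximal ideal agrees with the rank
of the localization at that maximal ideal. -/
lemma aux_fiber_eq_stalk {R M : Type*} [CommRing R] [AddCommGroup M] [Module R M]
    [Module.Finite R M] [Module.Projective R M] (m : Ideal R) [hm : m.IsMaximal] :
    Module.finrank (R ⧸ m) ((R ⧸ m) ⊗[R] M)
      = Module.finrank (Localization.AtPrime m) (LocalizedModule m.primeCompl M) := by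
  haveI := Module.finitePresentation_of_projective R M
  haveI : Module.Free (Localization.AtPrime m) (LocalizedModule m.primeCompl M) :=
    Module.free_of_flat_of_isLocalRing
  letI : Field (R ⧸ m) := Ideal.Quotient.field m
  have hunit : ∀ s : m.primeCompl, IsUnit (algebraMap R (R ⧸ m) s) := by
    intro s
    have hs : (algebraMap R (R ⧸ m)) s ≠ 0 := by
      rw [Ideal.Quotient.algebraMap_eq, Ne, Ideal.Quotient.eq_zero_iff_mem]
      exact s.2
    exact hs.isUnit
  letI : Algebra (Localization.AtPrime m) (R ⧸ m) :=
    (IsLocalization.lift (S := Localization.AtPrime m) hunit).toAlgebra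
  haveI : IsScalarTower R (Localization.AtPrime m) (R ⧸ m) :=
    IsScalarTower.of_algebraMap_eq fun r => (IsLocalization.lift_eq hunit r).symm
  have bc : IsBaseChange (Localization.AtPrime m) (LocalizedModule.mkLinearMap m.primeCompl M) :=
    (isLocalizedModule_iff_isBaseChange m.primeCompl (Localization.AtPrime m) _).mp inferInstance
  let e1 : (R ⧸ m) ⊗[R] M ≃ₗ[R ⧸ m]
      (R ⧸ m) ⊗[Localization.AtPrime m] ((Localization.AtPrime m) ⊗[R] M) :=
    (TensorProduct.AlgebraTensorModule.cancelBaseChange R (Localization.AtPrime m)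
      (R ⧸ m) (R ⧸ m) M).symm
  let e2 : (R ⧸ m) ⊗[Localization.AtPrime m] ((Localization.AtPrime m) ⊗[R] M)
      ≃ₗ[R ⧸ m] (R ⧸ m) ⊗[Localization.AtPrime m] (LocalizedModule m.primeCompl M) :=
    LinearEquiv.baseChange _ _ _ _ bc.equiv
  have hfr1 : Module.finrank (R ⧸ m) ((R ⧸ m) ⊗[R] M)
      = Module.finrank (R ⧸ m)
          ((R ⧸ m) ⊗[Localization.AtPrime m] ((Localization.AtPrime m) ⊗[R] M)) :=
    LinearEquiv.finrank_eq e1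
  have hfr2 : Module.finrank (R ⧸ m)
        ((R ⧸ m) ⊗[Localization.AtPrime m] ((Localization.AtPrime m) ⊗[R] M))
      = Module.finrank (R ⧸ m)
          ((R ⧸ m) ⊗[Localization.AtPrime m] (LocalizedModule m.primeCompl M)) :=
    LinearEquiv.finrank_eq e2
  rw [hfr1, hfr2, Module.finrank_baseChange]

/-- If all the localizations of a finite projective algebra at maximal ideals have rank one,
then the structure map is bijective. -/
lemma aux_algebraMap_bijective {R A : Type*} [CommRing R] [CommRing A] [Algebra R A]
    [Module.Finite R A] [Module.Projective R A]
    (h : ∀ (P : Ideal R) [P.IsMaximal],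
      Module.finrank (Localization.AtPrime P) (LocalizedModule P.primeCompl A) = 1) :
    Function.Bijective (algebraMap R A) := by
  haveI := Module.finitePresentation_of_projective R A
  refine bijective_of_isLocalized_maximal
    (fun P _ => Localization.AtPrime P) (fun P _ => Algebra.linearMap R (Localization.AtPrime P))
    (fun P _ => LocalizedModule P.primeCompl A)
    (fun P _ => LocalizedModule.mkLinearMap P.primeCompl A)
    (Algebra.linearMap R A) ?_
  intro P hP
  haveI : Module.Free (Localization.AtPrime P) (LocalizedModule P.primeCompl A) :=
    Module.free_of_flat_of_isLocalRing
  letI : Algebra (Localization.AtPrime P) (LocalizedModule P.primeCompl A) :=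
    LocalizedModule.algebraOfIsLocalization (S := P.primeCompl) (Localization.AtPrime P)
  have key : (IsLocalizedModule.map P.primeCompl (Algebra.linearMap R (Localization.AtPrime P))
      (LocalizedModule.mkLinearMap P.primeCompl A)) (Algebra.linearMap R A)
      = (IsScalarTower.toAlgHom R (Localization.AtPrime P)
          (LocalizedModule P.primeCompl A)).toLinearMap := by
    apply IsLocalizedModule.ext P.primeCompl (Algebra.linearMap R (Localization.AtPrime P))
      (IsLocalizedModule.map_units (LocalizedModule.mkLinearMap P.primeCompl A))
    rw [IsLocalizedModule.map_comp]
    refine LinearMap.ext fun r => ?_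
    show LocalizedModule.mk (algebraMap R A r) 1
      = algebraMap (Localization.AtPrime P) (LocalizedModule P.primeCompl A)
          (algebraMap R (Localization.AtPrime P) r)
    rw [← Localization.mk_one_eq_algebraMap, LocalizedModule.algebraMap_mk]
  have hmod : (LocalizedModule.algebraOfIsLocalization (S := P.primeCompl)
      (Localization.AtPrime P) (A := A)).toModule = OreLocalization.instModule := by
    apply Module.ext'
    intro r x
    induction r using Localization.induction_on with | H p => ?_
    obtain ⟨a, s⟩ := p
    induction x using LocalizedModule.induction_on with | h m t => ?_
    rw [LocalizedModule.mk_smul_mk]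
    rw [Localization.mk_eq_mk', LocalizedModule.mk'_smul_mk]
  rw [key]
  exact @aux_bij_of_rank_one _ _ _ _ _ _
    (by convert ‹Module.Free (Localization.AtPrime P) (LocalizedModule P.primeCompl A)›
        exacts [rfl, rfl])
    (by convert (inferInstance :
      Module.Finite (Localization.AtPrime P) (LocalizedModule P.primeCompl A))
        exacts [rfl, rfl])
    (by convert h P
        exacts [rfl, rfl])

end AuxLemmas


/-- The localization of a finite projective module at a prime is free. -/
lemma aux_stalk_free {R A : Type*} [CommRing R] [AddCommGroup A] [Module R A]
    [Module.Finite R A] [Module.Projective R A] (P : Ideal R) [P.IsPrime] :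
    Module.Free (Localization.AtPrime P) (LocalizedModule P.primeCompl A) := by
  haveI := Module.finitePresentation_of_projective R A
  exact Module.free_of_flat_of_isLocalRing

/-- A finite projective module whose stalk ranks at maximal ideals all vanish is trivial. -/
lemma aux_subsingleton_of_stalks {R A : Type*} [CommRing R] [AddCommGroup A] [Module R A]
    [Module.Finite R A] [Module.Projective R A]
    (h : ∀ (P : Ideal R), ∀ (_ : P.IsMaximal),
      Module.finrank (Localization.AtPrime P) (LocalizedModule P.primeCompl A) = 0) :
    Subsingleton A := by
  constructor
  intro x y
  apply Module.eq_of_localization_maximal (R := R) (M := A)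
    (fun P _ => LocalizedModule P.primeCompl A)
    (fun P _ => LocalizedModule.mkLinearMap P.primeCompl A)
  intro P hP
  haveI := Module.finitePresentation_of_projective R A
  haveI := aux_stalk_free (R := R) (A := A) P
  haveI := aux_subsingleton_of_finrank_zero (h P hP)
  exact Subsingleton.elim _ _

/-- Main auxiliary step: if `S` is finite projective over `R` with connected base and fibers of
dimension `2`, and `S ≃ A × B` with `A`, `B` nontrivial, then `R → A` and `R → B` are
bijective. -/
lemma aux_main {R S A B : Type*} [CommRing R] [CommRing S] [Algebra R S]
    [CommRing A] [Algebra R A] [CommRing B] [Algebra R B]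
    [Module.Finite R S] [Module.Projective R S]
    (hconn : ∀ e : R, e * e = e → e = 0 ∨ e = 1)
    (hrank : ∀ m : Ideal R, m.IsMaximal →
      Module.finrank (R ⧸ m) ((R ⧸ m) ⊗[R] S) = 2)
    (Φ : S →ₐ[R] A × B) (hΦ : Function.Bijective Φ)
    [Nontrivial A] [Nontrivial B] :
    Function.Bijective (algebraMap R A) ∧ Function.Bijective (algebraMap R B) := by
  classical
  let Φₗ : S ≃ₗ[R] A × B := LinearEquiv.ofBijective Φ.toLinearMap hΦ
  -- A and B are finite projective R-modules
  haveI : Module.Finite R A :=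
    Module.Finite.of_surjective ((LinearMap.fst R A B).comp Φₗ.toLinearMap)
      (fun a => ⟨Φₗ.symm (a, 0), by simp⟩)
  haveI : Module.Finite R B :=
    Module.Finite.of_surjective ((LinearMap.snd R A B).comp Φₗ.toLinearMap)
      (fun b => ⟨Φₗ.symm (0, b), by simp⟩)
  haveI : Module.Projective R A :=
    Module.Projective.of_split (Φₗ.symm.toLinearMap ∘ₗ LinearMap.inl R A B)
      (LinearMap.fst R A B ∘ₗ Φₗ.toLinearMap) (by ext x; simp)
  haveI : Module.Projective R B :=
    Module.Projective.of_split (Φₗ.symm.toLinearMap ∘ₗ LinearMap.inr R A B)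
      (LinearMap.snd R A B ∘ₗ Φₗ.toLinearMap) (by ext x; simp)
  -- nontriviality of R
  haveI : Nontrivial R := by
    by_contra hR
    rw [not_nontrivial_iff_subsingleton] at hR
    haveI := hR
    haveI := Module.subsingleton R A
    exact (not_subsingleton_iff_nontrivial.mpr ‹Nontrivial A›) ‹Subsingleton A›
  -- fiber ranks add up to 2 at every maximal ideal
  have hfiber : ∀ (m : Ideal R), ∀ (_ : m.IsMaximal),
      Module.finrank (R ⧸ m) ((R ⧸ m) ⊗[R] A)
        + Module.finrank (R ⧸ m) ((R ⧸ m) ⊗[R] B) = 2 := by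
    intro m hm
    haveI := hm
    letI : Field (R ⧸ m) := Ideal.Quotient.field m
    have hsurj : Function.Surjective (algebraMap R (R ⧸ m)) := by
      exact Ideal.Quotient.mk_surjective
    let E : (R ⧸ m) ⊗[R] S ≃ₗ[R ⧸ m] ((R ⧸ m) ⊗[R] A) × ((R ⧸ m) ⊗[R] B) :=
      (LinearEquiv.baseChange R (R ⧸ m) S (A × B) Φₗ).trans
        (LinearEquiv.extendScalarsOfSurjective hsurj (TensorProduct.prodRight R R (R ⧸ m) A B))
    haveI := Module.Finite.base_change R (R ⧸ m) A
    haveI := Module.Finite.base_change R (R ⧸ m) B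
    rw [← Module.finrank_prod, ← LinearEquiv.finrank_eq E]
    exact hrank m hm
  -- stalk ranks are locally constant, hence constant
  haveI := aux_preconnected hconn
  haveI := Module.finitePresentation_of_projective R A
  haveI := Module.finitePresentation_of_projective R B
  have hconstA :=
    (Module.isLocallyConstant_rankAtStalk (R := R) (M := A)).apply_eq_of_preconnectedSpace
  have hconstB :=
    (Module.isLocallyConstant_rankAtStalk (R := R) (M := B)).apply_eq_of_preconnectedSpace
  obtain ⟨m₀, hm₀⟩ := Ideal.exists_maximal R
  haveI := hm₀
  have hstalkA : ∀ (m : Ideal R), ∀ (_ : m.IsMaximal),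
      Module.finrank (Localization.AtPrime m) (LocalizedModule m.primeCompl A)
        = Module.finrank (Localization.AtPrime m₀) (LocalizedModule m₀.primeCompl A) := by
    intro m hm
    exact hconstA ⟨m, hm.isPrime⟩ ⟨m₀, hm₀.isPrime⟩
  have hstalkB : ∀ (m : Ideal R), ∀ (_ : m.IsMaximal),
      Module.finrank (Localization.AtPrime m) (LocalizedModule m.primeCompl B)
        = Module.finrank (Localization.AtPrime m₀) (LocalizedModule m₀.primeCompl B) := by
    intro m hm
    exact hconstB ⟨m, hm.isPrime⟩ ⟨m₀, hm₀.isPrime⟩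
  -- the constant stalk ranks are nonzero
  have hA_ne : Module.finrank (Localization.AtPrime m₀) (LocalizedModule m₀.primeCompl A) ≠ 0 := by
    intro h0
    haveI : Subsingleton A :=
      aux_subsingleton_of_stalks (R := R) (A := A) (fun P hP => (hstalkA P hP).trans h0)
    exact (not_subsingleton_iff_nontrivial.mpr ‹Nontrivial A›) ‹Subsingleton A›
  have hB_ne : Module.finrank (Localization.AtPrime m₀) (LocalizedModule m₀.primeCompl B) ≠ 0 := by
    intro h0
    haveI : Subsingleton B :=
      aux_subsingleton_of_stalks (R := R) (A := B) (fun P hP => (hstalkB P hP).trans h0)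
    exact (not_subsingleton_iff_nontrivial.mpr ‹Nontrivial B›) ‹Subsingleton B›
  -- hence both constants are 1
  have hsum₀ : Module.finrank (Localization.AtPrime m₀) (LocalizedModule m₀.primeCompl A)
      + Module.finrank (Localization.AtPrime m₀) (LocalizedModule m₀.primeCompl B) = 2 := by
    rw [← aux_fiber_eq_stalk m₀, ← aux_fiber_eq_stalk m₀]
    exact hfiber m₀ hm₀
  have hA1 : Module.finrank (Localization.AtPrime m₀) (LocalizedModule m₀.primeCompl A) = 1 := by
    omega
  have hB1 : Module.finrank (Localization.AtPrime m₀) (LocalizedModule m₀.primeCompl B) = 1 := by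
    omega
  exact ⟨aux_algebraMap_bijective (fun P hP => (hstalkA P hP).trans hA1),
    aux_algebraMap_bijective (fun P hP => (hstalkB P hP).trans hB1)⟩

/-- Let `R` be a connected commutative ring with `2` invertible and `S` a quadratic étale
`R`-algebra (finite projective of rank `2`, commutative and separable, i.e. unramified).
If `S` has an idempotent other than `0` and `1`, then `S ≅ R × R` as `R`-algebras. -/
theorem stmt_2 {R S : Type*} [CommRing R] [CommRing S] [Algebra R S]
    (h2 : IsUnit (2 : R))
    (hconn : ∀ e : R, e * e = e → e = 0 ∨ e = 1)
    [Module.Finite R S] [Module.Projective R S] [Algebra.FormallyUnramified R S]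
    (hrank : ∀ m : Ideal R, m.IsMaximal →
      Module.finrank (R ⧸ m) ((R ⧸ m) ⊗[R] S) = 2)
    (e : S) (he : e * e = e) (he0 : e ≠ 0) (he1 : e ≠ 1) :
    Nonempty (S ≃ₐ[R] R × R) := by
  classical
  let I₁ : Ideal S := Ideal.span {1 - e}
  let I₂ : Ideal S := Ideal.span {e}
  let Φ : S →ₐ[R] (S ⧸ I₁) × (S ⧸ I₂) :=
    (Ideal.Quotient.mkₐ R I₁).prod (Ideal.Quotient.mkₐ R I₂)
  -- Φ is bijective
  have hΦinj : Function.Injective Φ := by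
    rw [injective_iff_map_eq_zero]
    intro z hz
    have h1 : Ideal.Quotient.mk I₁ z = 0 := congrArg Prod.fst hz
    have h2' : Ideal.Quotient.mk I₂ z = 0 := congrArg Prod.snd hz
    rw [Ideal.Quotient.eq_zero_iff_mem] at h1 h2'
    obtain ⟨s, hs⟩ := Ideal.mem_span_singleton'.mp h1
    obtain ⟨t, ht⟩ := Ideal.mem_span_singleton'.mp h2'
    have hz1 : z * e = 0 := by
      have h0 : (1 - e) * e = 0 := by rw [sub_mul, one_mul, he, sub_self]
      rw [← hs, mul_assoc, h0, mul_zero]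
    have hz2 : z * e = z := by rw [← ht, mul_assoc, he]
    rw [← hz2]
    exact hz1
  have hΦsurj : Function.Surjective Φ := by
    rintro ⟨a, b⟩
    obtain ⟨s, rfl⟩ := Ideal.Quotient.mk_surjective a
    obtain ⟨t, rfl⟩ := Ideal.Quotient.mk_surjective b
    refine ⟨e * s + (1 - e) * t, Prod.ext ?_ ?_⟩
    · show Ideal.Quotient.mk I₁ (e * s + (1 - e) * t) = Ideal.Quotient.mk I₁ s
      rw [Ideal.Quotient.eq]
      exact Ideal.mem_span_singleton'.mpr ⟨t - s, by ring⟩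
    · show Ideal.Quotient.mk I₂ (e * s + (1 - e) * t) = Ideal.Quotient.mk I₂ t
      rw [Ideal.Quotient.eq]
      exact Ideal.mem_span_singleton'.mpr ⟨s - t, by ring⟩
  have hΦ : Function.Bijective Φ := ⟨hΦinj, hΦsurj⟩
  -- the quotients are nontrivial
  have hI₁top : I₁ ≠ ⊤ := by
    intro hI
    have h1 : (1 : S) ∈ I₁ := hI ▸ Submodule.mem_top
    obtain ⟨s, hs⟩ := Ideal.mem_span_singleton'.mp h1
    apply he0
    calc e = (s * (1 - e)) * e := by rw [hs, one_mul]
      _ = s * (e - e * e) := by ring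
      _ = 0 := by rw [he, sub_self, mul_zero]
  have hI₂top : I₂ ≠ ⊤ := by
    intro hI
    have h1 : (1 : S) ∈ I₂ := hI ▸ Submodule.mem_top
    obtain ⟨s, hs⟩ := Ideal.mem_span_singleton'.mp h1
    apply he1
    have h0 : (1 : S) - e = 0 := by
      calc (1 : S) - e = (s * e) * (1 - e) := by rw [hs, one_mul]
        _ = s * (e - e * e) := by ring
        _ = 0 := by rw [he, sub_self, mul_zero]
    linear_combination -h0
  haveI : Nontrivial (S ⧸ I₁) := Ideal.Quotient.nontrivial_iff.mpr hI₁top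
  haveI : Nontrivial (S ⧸ I₂) := Ideal.Quotient.nontrivial_iff.mpr hI₂top
  obtain ⟨bijA, bijB⟩ := aux_main hconn hrank Φ hΦ
  let gA : R ≃ₐ[R] (S ⧸ I₁) := AlgEquiv.ofBijective (Algebra.ofId R (S ⧸ I₁)) (by exact bijA)
  let gB : R ≃ₐ[R] (S ⧸ I₂) := AlgEquiv.ofBijective (Algebra.ofId R (S ⧸ I₂)) (by exact bijB)
  let Ψ : S →ₐ[R] R × R :=
    (gA.symm.toAlgHom.comp (Ideal.Quotient.mkₐ R I₁)).prod
      (gB.symm.toAlgHom.comp (Ideal.Quotient.mkₐ R I₂))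
  have hΨ : Function.Bijective Ψ := by
    have hfun : ⇑Ψ = (Prod.map ⇑gA.symm ⇑gB.symm) ∘ ⇑Φ := rfl
    rw [hfun]
    exact (gA.symm.bijective.prodMap gB.symm.bijective).comp hΦ
  exact ⟨AlgEquiv.ofBijective Ψ hΨ⟩
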